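/- Under the FCFS docking discipline at a factory with c ports, at any time instant the number of vehicles simultaneously in service (between service start and departure) is at most c. -/

import Mathlib

/-- Counting bridge: `countP` on a prefix of `List.ofFn d` equals a `Finset` card. -/
lemma bridge {n : ℕ} (d : Fin n → ℝ) (p : ℝ → Prop) [DecidablePred p] :
    ∀ m : ℕ, m ≤ n →
      (((List.ofFn d).take m).countP fun a => decide (p a)) =
        (Finset.univ.filter fun j : Fin n => (j : ℕ) < m ∧ p (d j)).card := by
  intro m
  induction m with
  | zero => intro _; simp
  | succ m ih =>
    intro hm
    have hmn : m < n := hm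
    rw [List.take_succ, List.countP_append, ih (le_of_lt hmn)]
    have h1 : ((List.ofFn d)[m]?).toList = [d ⟨m, hmn⟩] := by
      rw [List.getElem?_ofFn]
      simp [List.ofFnNthVal, hmn]
    rw [h1]
    have h2 : (Finset.univ.filter fun j : Fin n => (j : ℕ) < m + 1 ∧ p (d j)) =
        (Finset.univ.filter fun j : Fin n => (j : ℕ) < m ∧ p (d j)) ∪
        (Finset.univ.filter fun j : Fin n => j = ⟨m, hmn⟩ ∧ p (d j)) := by
      ext j
      simp only [Finset.mem_union, Finset.mem_filter, Finset.mem_univ, true_and]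
      constructor
      · rintro ⟨hj, hp⟩
        rcases Nat.lt_succ_iff_lt_or_eq.mp hj with h | h
        · exact Or.inl ⟨h, hp⟩
        · exact Or.inr ⟨Fin.ext h, hp⟩
      · rintro (⟨hj, hp⟩ | ⟨hj, hp⟩)
        · exact ⟨Nat.lt_succ_of_lt hj, hp⟩
        · exact ⟨by rw [hj]; exact Nat.lt_succ_self m, hp⟩
    rw [h2, Finset.card_union_of_disjoint]
    · congr 1
      by_cases hp : p (d ⟨m, hmn⟩)
      · rw [List.countP_cons_of_pos (by simpa using hp), List.countP_nil]
        have : (Finset.univ.filter fun j : Fin n => j = ⟨m, hmn⟩ ∧ p (d j)) = {⟨m, hmn⟩} := by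
          ext j
          simp only [Finset.mem_filter, Finset.mem_univ, true_and, Finset.mem_singleton]
          constructor
          · rintro ⟨rfl, _⟩; rfl
          · rintro rfl; exact ⟨rfl, hp⟩
        rw [this, Finset.card_singleton]
      · rw [List.countP_cons_of_neg (by simpa using hp), List.countP_nil]
        have : (Finset.univ.filter fun j : Fin n => j = ⟨m, hmn⟩ ∧ p (d j)) = ∅ := by
          ext j
          simp only [Finset.mem_filter, Finset.mem_univ, true_and, Finset.notMem_empty,
            iff_false, not_and]
          rintro rfl; exact hp
        rw [this, Finset.card_empty]
    · rw [Finset.disjoint_left]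
      intro j hj1 hj2
      simp only [Finset.mem_filter, Finset.mem_univ, true_and] at hj1 hj2
      rw [hj2.1] at hj1
      exact absurd hj1.1 (by simp)

lemma sorted_countP_lt (L : List ℝ)
    (hs : ∀ (q r : ℕ) (hq : q < L.length) (hr : r < L.length), q ≤ r → L[q] ≤ L[r])
    (p : ℕ) (hp : p < L.length) :
    (L.countP fun a => decide (L[p] < a)) ≤ L.length - p - 1 := by
  have hsplit : (L.countP fun a => decide (L[p] < a)) =
      ((L.take (p + 1)).countP fun a => decide (L[p] < a)) +
      ((L.drop (p + 1)).countP fun a => decide (L[p] < a)) := by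
    rw [← List.countP_append, List.take_append_drop]
  have h0 : ((L.take (p + 1)).countP fun a => decide (L[p] < a)) = 0 := by
    rw [List.countP_eq_zero]
    intro a ha
    rcases List.mem_take_iff_getElem.mp ha with ⟨q, hq, rfl⟩
    simp only [decide_eq_true_eq, not_lt]
    exact hs q p (by omega) hp (by omega)
  have h1 : ((L.drop (p + 1)).countP fun a => decide (L[p] < a)) ≤ L.length - (p + 1) := by
    calc ((L.drop (p + 1)).countP fun a => decide (L[p] < a)) ≤ (L.drop (p + 1)).length :=
          List.countP_le_length
      _ = L.length - (p + 1) := List.length_drop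
  omega

lemma sorted_countP_le (L : List ℝ)
    (hs : ∀ (q r : ℕ) (hq : q < L.length) (hr : r < L.length), q ≤ r → L[q] ≤ L[r])
    (p : ℕ) (hp : p < L.length) :
    L.length - p ≤ L.countP fun a => decide (L[p] ≤ a) := by
  have hsplit : (L.countP fun a => decide (L[p] ≤ a)) =
      ((L.take p).countP fun a => decide (L[p] ≤ a)) +
      ((L.drop p).countP fun a => decide (L[p] ≤ a)) := by
    rw [← List.countP_append, List.take_append_drop]
  have h1 : ((L.drop p).countP fun a => decide (L[p] ≤ a)) = (L.drop p).length := by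
    rw [List.countP_eq_length]
    intro a ha
    rcases List.mem_drop_iff_getElem.mp ha with ⟨q, hq, rfl⟩
    simp only [decide_eq_true_eq]
    exact hs p (p + q) hp (by omega) (by omega)
  have h2 : (L.drop p).length = L.length - p := List.length_drop
  omega

/-- If a set contains only indices `< i` (as naturals on `Fin n`), its card is at most `i`. -/
lemma card_le_of_lt {n : ℕ} (i : Fin n) (s : Finset (Fin n)) (hs : ∀ j ∈ s, j < i) :
    s.card ≤ (i : ℕ) := by
  classical
  calc s.card = (s.image Fin.val).card := (Finset.card_image_of_injective s Fin.val_injective).symm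
    _ ≤ (Finset.range (i : ℕ)).card := by
        apply Finset.card_le_card
        intro k hk
        simp only [Finset.mem_image] at hk
        rcases hk with ⟨j, hj, rfl⟩
        simpa using hs j hj
    _ = (i : ℕ) := Finset.card_range _


/-- Bounds coming from the order statistic `x`, the `(i-c)`-th smallest of the
departures of vehicles `< i`. -/
lemma case2_bounds {n : ℕ} (c : ℕ) (hc : 1 ≤ c) (d : Fin n → ℝ) (i : Fin n)
    (hci : c ≤ (i : ℕ)) (x : ℝ)
    (hx : x = (((List.ofFn d).take (i : ℕ)).mergeSort fun a b => decide (a ≤ b)).getD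
        ((i : ℕ) - c) 0) :
    (∀ s : Finset (Fin n), (∀ k ∈ s, k < i ∧ x < d k) → s.card + 1 ≤ c) ∧
    (∀ s : Finset (Fin n), (∀ k : Fin n, k < i → x ≤ d k → k ∈ s) → c ≤ s.card) := by
  classical
  set L : List ℝ := ((List.ofFn d).take (i : ℕ)).mergeSort fun a b => decide (a ≤ b) with hL
  have hlen : L.length = (i : ℕ) := by
    rw [hL, List.length_mergeSort, List.length_take, List.length_ofFn]
    exact Nat.min_eq_left (le_of_lt i.isLt)
  have hp : (i : ℕ) - c < L.length := by omega
  have hxx : x = L[(i : ℕ) - c] := by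
    rw [hx, List.getD_eq_getElem?_getD, List.getElem?_eq_getElem hp, Option.getD_some]
  have hsort : L.Pairwise fun a b => decide (a ≤ b) := by
    apply List.pairwise_mergeSort
    · intro a b c hab hbc
      simp only [decide_eq_true_eq] at *
      exact le_trans hab hbc
    · intro a b
      simpa using le_total a b
  have hmono : ∀ (q r : ℕ) (hq : q < L.length) (hr : r < L.length), q ≤ r → L[q] ≤ L[r] := by
    intro q r hq hr hqr
    rcases eq_or_lt_of_le hqr with rfl | h
    · exact le_refl _
    · have := List.pairwise_iff_getElem.mp hsort q r hq hr h
      simpa using this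
  have count_eq : ∀ (p : ℝ → Prop) [DecidablePred p],
      (L.countP fun a => decide (p a)) =
        (Finset.univ.filter fun j : Fin n => (j : ℕ) < (i : ℕ) ∧ p (d j)).card := by
    intro p _
    rw [hL, List.Perm.countP_eq _ (List.mergeSort_perm _ _)]
    exact bridge d p (i : ℕ) (le_of_lt i.isLt)
  constructor
  · -- upper bound on strictly-later departures
    intro s hs
    have h1 : (L.countP fun a => decide (x < a)) ≤ L.length - ((i : ℕ) - c) - 1 := by
      rw [hxx]; exact sorted_countP_lt L hmono _ hp
    rw [count_eq (fun a => x < a)] at h1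
    have h2 : s.card ≤ (Finset.univ.filter fun j : Fin n => (j : ℕ) < (i : ℕ) ∧ x < d j).card := by
      apply Finset.card_le_card
      intro k hk
      rcases hs k hk with ⟨hk1, hk2⟩
      exact Finset.mem_filter.mpr ⟨Finset.mem_univ _, hk1, hk2⟩
    omega
  · -- lower bound on late-enough departures
    intro s hs
    have h1 : L.length - ((i : ℕ) - c) ≤ L.countP fun a => decide (x ≤ a) := by
      rw [hxx]; exact sorted_countP_le L hmono _ hp
    rw [count_eq (fun a => x ≤ a)] at h1
    have h2 : (Finset.univ.filter fun j : Fin n => (j : ℕ) < (i : ℕ) ∧ x ≤ d j).card ≤ s.card := by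
      apply Finset.card_le_card
      intro k hk
      rcases Finset.mem_filter.mp hk with ⟨-, hk1, hk2⟩
      exact hs k hk1 hk2
    omega




/-- Under the FCFS docking discipline at a factory with `c ≥ 1` ports, at
any time instant the number of vehicles simultaneously in service (on `[b i, d i)`) is
at most `c`.  Vehicle `i` has arrival time `t i` (nondecreasing in `i`), service start
`b i`, service time `st i > 0` and departure `d i = b i + st i`; FCFS: `b i = t i` if at
time `t i` fewer than `c` earlier-arrived vehicles are in service, and otherwise `b i`
is the `(i - c)`-th smallest (0-based) departure time among the earlier vehicles. -/
theorem stmt_18 {n : ℕ} (c : ℕ) (hc : 1 ≤ c) (t b st d : Fin n → ℝ)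
    (h_arr : Monotone t)
    (h_st : ∀ i, 0 < st i)
    (h_dep : ∀ i, d i = b i + st i)
    (h_fcfs : ∀ i : Fin n,
      b i = if (Finset.univ.filter fun j : Fin n =>
              j < i ∧ b j ≤ t i ∧ t i < d j).card < c
            then t i
            else (((List.ofFn d).take i).mergeSort (fun a b => decide (a ≤ b))).getD
                  ((i : ℕ) - c) 0) :
    ∀ time : ℝ,
      (Finset.univ.filter fun i : Fin n => b i ≤ time ∧ time < d i).card ≤ c := by
  classical
  -- Step 1: `t i ≤ b i` and `b` is monotone.
  have key : ∀ i : Fin n, t i ≤ b i ∧ ∀ j : Fin n, j < i → b j ≤ b i := by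
    intro i
    have hbi := h_fcfs i
    split_ifs at hbi with hcond
    · -- Case 1 : `b i = t i`.
      refine ⟨le_of_eq hbi.symm, ?_⟩
      intro j hj
      by_contra hbj
      push_neg at hbj
      -- take the minimal index `j0 < i` with `b i < b j0`
      set S : Finset (Fin n) := Finset.univ.filter (fun k : Fin n => k < i ∧ b i < b k) with hS
      have hSne : S.Nonempty := ⟨j, by simp [hS]; exact ⟨hj, hbj⟩⟩
      set j0 : Fin n := S.min' hSne with hj0def
      have hj0S : j0 ∈ S := S.min'_mem hSne
      have hj0 : j0 < i ∧ b i < b j0 := by simpa [hS] using hj0S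
      have hmin : ∀ k : Fin n, k < j0 → b k ≤ b i := by
        intro k hk
        by_contra hbk
        push_neg at hbk
        have hkS : k ∈ S := by
          simp only [hS, Finset.mem_filter, Finset.mem_univ, true_and]
          exact ⟨lt_trans hk hj0.1, hbk⟩
        exact absurd (S.min'_le k hkS) (not_le.mpr hk)
      -- `j0` must be in case 2 of the FCFS rule
      have hb0 := h_fcfs j0
      split_ifs at hb0 with hcond0
      · have : b j0 ≤ b i := by
          rw [hb0, hbi]; exact h_arr (le_of_lt hj0.1)
        exact absurd hj0.1 (by intro _; exact absurd hj0.2 (not_lt.mpr this))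
      · have hcj0 : c ≤ (j0 : ℕ) := by
          have h1 := card_le_of_lt j0
            (Finset.univ.filter fun k : Fin n => k < j0 ∧ b k ≤ t j0 ∧ t j0 < d k)
            (by intro k hk; exact (Finset.mem_filter.mp hk).2.1)
          omega
        obtain ⟨-, hB⟩ := case2_bounds c hc d j0 hcj0 (b j0) hb0
        -- the ≥ c vehicles with departures `≥ b j0` are in service at `t i`
        apply absurd hcond
        push_neg
        apply hB
        intro k hk1 hk2
        refine Finset.mem_filter.mpr ⟨Finset.mem_univ _, lt_trans hk1 hj0.1, ?_, ?_⟩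
        · rw [← hbi]; exact hmin k hk1
        · calc t i = b i := hbi.symm
            _ < b j0 := hj0.2
            _ ≤ d k := hk2
    · -- Case 2 : `b i` is the `(i-c)`-th smallest earlier departure.
      have hci : c ≤ (i : ℕ) := by
        have h1 := card_le_of_lt i
          (Finset.univ.filter fun k : Fin n => k < i ∧ b k ≤ t i ∧ t i < d k)
          (by intro k hk; exact (Finset.mem_filter.mp hk).2.1)
        omega
      obtain ⟨hA, hB⟩ := case2_bounds c hc d i hci (b i) hbi
      have hti : t i ≤ b i := by
        by_contra h
        push_neg at h
        have h2 := hA (Finset.univ.filter fun k : Fin n => k < i ∧ b k ≤ t i ∧ t i < d k)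
          (by
            intro k hk
            rcases Finset.mem_filter.mp hk with ⟨-, hk1, -, hk3⟩
            exact ⟨hk1, lt_trans h hk3⟩)
        omega
      refine ⟨hti, ?_⟩
      intro j hj
      by_contra hbj
      push_neg at hbj
      have hbj' := h_fcfs j
      split_ifs at hbj' with hcondj
      · have : b j ≤ b i := by
          rw [hbj']; exact le_trans (h_arr (le_of_lt hj)) hti
        exact absurd hbj (not_lt.mpr this)
      · have hcj : c ≤ (j : ℕ) := by
          have h1 := card_le_of_lt j
            (Finset.univ.filter fun k : Fin n => k < j ∧ b k ≤ t j ∧ t j < d k)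
            (by intro k hk; exact (Finset.mem_filter.mp hk).2.1)
          omega
        obtain ⟨-, hBj⟩ := case2_bounds c hc d j hcj (b j) hbj'
        set T : Finset (Fin n) := Finset.univ.filter (fun k : Fin n => k < i ∧ b i < d k) with hT
        have hjT : j ∈ T := by
          simp only [hT, Finset.mem_filter, Finset.mem_univ, true_and]
          refine ⟨hj, lt_trans hbj ?_⟩
          rw [h_dep j]
          linarith [h_st j]
        have h1 : c ≤ (T.erase j).card := by
          apply hBj
          intro k hk1 hk2
          refine Finset.mem_erase.mpr ⟨ne_of_lt hk1, ?_⟩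
          simp only [hT, Finset.mem_filter, Finset.mem_univ, true_and]
          exact ⟨lt_trans hk1 hj, lt_of_lt_of_le hbj hk2⟩
        have h2 : T.card + 1 ≤ c := by
          apply hA
          intro k hk
          simpa [hT] using hk
        have h3 : (T.erase j).card = T.card - 1 := Finset.card_erase_of_mem hjT
        have h4 : 1 ≤ T.card := Finset.card_pos.mpr ⟨j, hjT⟩
        omega
  -- Step 2: the main claim.
  intro time
  by_contra hcon
  push_neg at hcon
  set G : Finset (Fin n) := Finset.univ.filter (fun i : Fin n => b i ≤ time ∧ time < d i)
    with hG
  have hGne : G.Nonempty := Finset.card_pos.mp (by omega)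
  set i : Fin n := G.max' hGne with hi
  have hiG : i ∈ G := G.max'_mem hGne
  have hiserv : b i ≤ time ∧ time < d i := by simpa [hG] using hiG
  have hsub : ∀ j ∈ G.erase i, j < i ∧ b j ≤ b i ∧ b i < d j := by
    intro j hj
    rcases Finset.mem_erase.mp hj with ⟨hne, hjG⟩
    have hji : j < i := lt_of_le_of_ne (G.le_max' j hjG) hne
    have hjserv : b j ≤ time ∧ time < d j := by simpa [hG] using hjG
    exact ⟨hji, (key i).2 j hji, lt_of_le_of_lt hiserv.1 hjserv.2⟩
  have hGe : c ≤ (G.erase i).card := by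
    have := Finset.card_erase_of_mem hiG
    omega
  have hbi := h_fcfs i
  split_ifs at hbi with hcond
  · -- case 1: at time `t i = b i` there are at least `c` earlier vehicles in service
    apply absurd hcond
    push_neg
    calc c ≤ (G.erase i).card := hGe
      _ ≤ _ := by
          apply Finset.card_le_card
          intro j hj
          rcases hsub j hj with ⟨hji, hbj, hdj⟩
          refine Finset.mem_filter.mpr ⟨Finset.mem_univ _, hji, ?_, ?_⟩
          · rw [← hbi]; exact hbj
          · rw [← hbi]; exact hdj
  · -- case 2: contradiction with the order-statistic bound
    have hci : c ≤ (i : ℕ) := by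
      have h1 := card_le_of_lt i
        (Finset.univ.filter fun k : Fin n => k < i ∧ b k ≤ t i ∧ t i < d k)
        (by intro k hk; exact (Finset.mem_filter.mp hk).2.1)
      omega
    obtain ⟨hA, -⟩ := case2_bounds c hc d i hci (b i) hbi
    have h2 : (G.erase i).card + 1 ≤ c := by
      apply hA
      intro k hk
      rcases hsub k hk with ⟨hk1, -, hk3⟩
      exact ⟨hk1, hk3⟩
    omega
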